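/- Let A_1A_2A_3 be a non-degenerate triangle in ℝ² and A_0 a point in its interior with ∠A_1A_0A_2 = ∠A_1A_0A_3 = 120° (hence also ∠A_2A_0A_3 = 120°). If B̄_1, B̄_2, B̄_3 > 0 satisfy B̄_1 + B̄_2 + B̄_3 = 1 and B̄_1 + B̄_2 = B̄_3 + 1/3, and A_0 minimizes X ↦ Σ_{i=1}^3 B̄_i‖X − A_i‖, then B̄_1 = B̄_2 = B̄_3 = 1/3. -/

import Mathlib

set_option maxHeartbeats 1000000

open EuclideanGeometry
open scoped RealInnerProductSpace

private lemma inner2_aux (x y : EuclideanSpace ℝ (Fin 2)) :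
    ⟪x, y⟫ = x 0 * y 0 + x 1 * y 1 := by
  simp [PiLp.inner_apply, Fin.sum_univ_two, RCLike.inner_apply, mul_comm]

private lemma key2d_aux (u0 u1 v0 v1 w0 w1 a b c : ℝ)
    (ha : 0 < a)
    (ha2 : u0^2 + u1^2 = a^2) (hb2 : v0^2+v1^2 = b^2) (hc2 : w0^2+w1^2 = c^2)
    (huv : u0*v0 + u1*v1 = -(1/2)*(a*b)) (huw : u0*w0+u1*w1 = -(1/2)*(a*c))
    (hne : v0*w0 + v1*w1 ≠ b*c) :
    v0*w0 + v1*w1 = -(1/2)*(b*c) := by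
  set P := u0*v1 - u1*v0 with hPdef
  set Q := u0*w1 - u1*w0 with hQdef
  have hP : P^2 = 3/4 * (a^2*b^2) := by
    have h1 : P^2 = (u0^2+u1^2)*(v0^2+v1^2) - (u0*v0+u1*v1)^2 := by rw [hPdef]; ring
    rw [ha2, hb2, huv] at h1; rw [h1]; ring
  have hQ : Q^2 = 3/4 * (a^2*c^2) := by
    have h1 : Q^2 = (u0^2+u1^2)*(w0^2+w1^2) - (u0*w0+u1*w1)^2 := by rw [hQdef]; ring
    rw [ha2, hc2, huw] at h1; rw [h1]; ring
  have hkey : a^2 * (v0*w0+v1*w1) = (1/4)*(a^2*(b*c)) + P*Q := by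
    have h1 : (u0^2+u1^2) * (v0*w0+v1*w1) = (u0*v0+u1*v1)*(u0*w0+u1*w1) + P*Q := by
      rw [hPdef, hQdef]; ring
    rw [ha2, huv, huw] at h1; rw [h1]; ring
  have h2 : (P*Q)^2 = (3/4*(a^2*(b*c)))^2 := by
    rw [show (P*Q)^2 = P^2*Q^2 from by ring, hP, hQ]; ring
  have hPQ : (P*Q - 3/4*(a^2*(b*c))) * (P*Q + 3/4*(a^2*(b*c))) = 0 := by
    linear_combination h2
  have ha2ne : (a^2 : ℝ) ≠ 0 := by positivity
  rcases mul_eq_zero.1 hPQ with h | h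
  · exact absurd (mul_left_cancel₀ ha2ne (by rw [hkey]; linear_combination h)) hne
  · exact mul_left_cancel₀ ha2ne (by rw [hkey]; linear_combination h)

private lemma hasFDerivAt_norm_sub_aux {E : Type*} [NormedAddCommGroup E]
    [InnerProductSpace ℝ E] (a x : E) (h : x ≠ a) :
    HasFDerivAt (fun X => ‖X - a‖) (‖x - a‖⁻¹ • innerSL ℝ (x - a)) x := by
  have hxa : x - a ≠ 0 := sub_ne_zero.2 h
  have hn : (0:ℝ) < ‖x - a‖ := norm_pos_iff.2 hxa
  have h1 : HasFDerivAt (fun X : E => X - a) (ContinuousLinearMap.id ℝ E) x :=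
    (hasFDerivAt_id x).sub_const a
  have h2 := h1.norm_sq
  have hne : ‖x - a‖^2 ≠ 0 := by positivity
  have h3 := h2.sqrt hne
  have hfun : (fun y : E => Real.sqrt (‖y - a‖^2)) = fun y : E => ‖y - a‖ := by
    funext y; exact Real.sqrt_sq (norm_nonneg _)
  rw [hfun] at h3
  convert h3 using 1
  rw [Real.sqrt_sq (norm_nonneg _)]
  ext d
  simp [ContinuousLinearMap.smul_apply, real_inner_smul_left]
  field_simp

/-- For a triangle `A₁A₂A₃` with interior point `A₀` at which
`∠A₁A₀A₂ = ∠A₁A₀A₃ = 120°`, one also has `∠A₂A₀A₃ = 120°`; and if positive weights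
satisfy `B̄₁+B̄₂+B̄₃ = 1`, `B̄₁+B̄₂ = B̄₃ + 1/3`, and `A₀` minimizes
`X ↦ ∑ B̄ᵢ‖X − Aᵢ‖`, then `B̄₁ = B̄₂ = B̄₃ = 1/3`. Indices are shifted:
`A 0, A 1, A 2` are `A₁, A₂, A₃`. -/
theorem mixed_inverse_equilateral_angles_triangle
    (A : Fin 3 → EuclideanSpace ℝ (Fin 2))
    (hA : AffineIndependent ℝ A)
    (A₀ : EuclideanSpace ℝ (Fin 2))
    (hA₀ : A₀ ∈ interior (convexHull ℝ (Set.range A)))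
    (h12 : ∠ (A 0) A₀ (A 1) = 2 * Real.pi / 3)
    (h13 : ∠ (A 0) A₀ (A 2) = 2 * Real.pi / 3) :
    ∠ (A 1) A₀ (A 2) = 2 * Real.pi / 3 ∧
    ∀ B : Fin 3 → ℝ, (∀ i, 0 < B i) →
      B 0 + B 1 + B 2 = 1 →
      B 0 + B 1 = B 2 + 1/3 →
      (∀ X : EuclideanSpace ℝ (Fin 2),
        ∑ i, B i * ‖A₀ - A i‖ ≤ ∑ i, B i * ‖X - A i‖) →
      B 0 = 1/3 ∧ B 1 = 1/3 ∧ B 2 = 1/3 := by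
  classical
  set u : EuclideanSpace ℝ (Fin 2) := A 0 - A₀ with hu_def
  set v : EuclideanSpace ℝ (Fin 2) := A 1 - A₀ with hv_def
  set w : EuclideanSpace ℝ (Fin 2) := A 2 - A₀ with hw_def
  have h12' : InnerProductGeometry.angle u v = 2 * Real.pi / 3 := by
    simpa [EuclideanGeometry.angle, vsub_eq_sub, hu_def, hv_def] using h12
  have h13' : InnerProductGeometry.angle u w = 2 * Real.pi / 3 := by
    simpa [EuclideanGeometry.angle, vsub_eq_sub, hu_def, hw_def] using h13
  have hpi : (2:ℝ) * Real.pi / 3 ≠ Real.pi / 2 := by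
    have := Real.pi_pos; intro hh; nlinarith
  have hu : u ≠ 0 := by
    intro h; rw [h, InnerProductGeometry.angle_zero_left] at h12'; exact hpi h12'.symm
  have hv : v ≠ 0 := by
    intro h; rw [h, InnerProductGeometry.angle_zero_right] at h12'; exact hpi h12'.symm
  have hw : w ≠ 0 := by
    intro h; rw [h, InnerProductGeometry.angle_zero_right] at h13'; exact hpi h13'.symm
  set a : ℝ := ‖u‖ with ha_def
  set b : ℝ := ‖v‖ with hb_def
  set c : ℝ := ‖w‖ with hc_def
  have ha : 0 < a := norm_pos_iff.2 hu
  have hb : 0 < b := norm_pos_iff.2 hv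
  have hc : 0 < c := norm_pos_iff.2 hw
  have hcos23 : Real.cos (2 * Real.pi / 3) = -(1/2) := by
    rw [show (2 * Real.pi / 3) = Real.pi - Real.pi / 3 by ring, Real.cos_pi_sub,
      Real.cos_pi_div_three]
  have huv : ⟪u, v⟫ = -(1/2) * (a * b) := by
    rw [← InnerProductGeometry.cos_angle_mul_norm_mul_norm, h12', hcos23]
  have huw : ⟪u, w⟫ = -(1/2) * (a * c) := by
    rw [← InnerProductGeometry.cos_angle_mul_norm_mul_norm, h13', hcos23]
  have ha2 : u 0 ^ 2 + u 1 ^ 2 = a ^ 2 := by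
    rw [ha_def, ← real_inner_self_eq_norm_sq, inner2_aux]; ring
  have hb2 : v 0 ^ 2 + v 1 ^ 2 = b ^ 2 := by
    rw [hb_def, ← real_inner_self_eq_norm_sq, inner2_aux]; ring
  have hc2 : w 0 ^ 2 + w 1 ^ 2 = c ^ 2 := by
    rw [hc_def, ← real_inner_self_eq_norm_sq, inner2_aux]; ring
  -- A₀ is interior: positive barycentric coordinates
  have hcard : Fintype.card (Fin 3) = Module.finrank ℝ (EuclideanSpace ℝ (Fin 2)) + 1 := by
    simp [finrank_euclideanSpace_fin]
  have htot : affineSpan ℝ (Set.range A) = ⊤ :=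
    hA.affineSpan_eq_top_iff_card_eq_finrank_add_one.2 hcard
  let bb : AffineBasis (Fin 3) ℝ (EuclideanSpace ℝ (Fin 2)) := ⟨A, hA, htot⟩
  have hco : ∀ i, 0 < bb.coord i A₀ := by
    have h := bb.interior_convexHull ▸ hA₀
    exact h
  -- v and w are not positively parallel
  have hvw_ne : ⟪v, w⟫ ≠ b * c := by
    intro hEq
    have hcol : c • v = b • w := by
      rw [hb_def, hc_def] at hEq ⊢
      exact inner_eq_norm_mul_iff_real.1 hEq
    have hvtw : v = (b / c) • w := by
      have : c⁻¹ • (c • v) = c⁻¹ • (b • w) := by rw [hcol]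
      rw [smul_smul, smul_smul, inv_mul_cancel₀ hc.ne', one_smul] at this
      rw [this, div_eq_inv_mul, mul_comm]
    have ht1 : b / c ≠ 1 := by
      intro h1
      have hbc : b = c := by field_simp at h1; exact h1
      have hvw' : v = w := by
        rw [hvtw, hbc, div_self hc.ne', one_smul]
      have : A 1 = A 2 := by
        have := hvw'
        rw [hv_def, hw_def] at this
        exact sub_left_injective this
      exact absurd (hA.injective this) (by decide)
    -- barycentric coordinate 0 vanishes
    have hfA1 : bb.coord 0 (A 1) = 0 := by
      have h : bb.coord 0 (bb 1) = 0 := by rw [bb.coord_apply]; simp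
      exact h
    have hfA2 : bb.coord 0 (A 2) = 0 := by
      have h : bb.coord 0 (bb 2) = 0 := by rw [bb.coord_apply]; simp
      exact h
    have hLv : (bb.coord 0).linear v = bb.coord 0 (A 1) - bb.coord 0 A₀ := by
      rw [hv_def, ← vsub_eq_sub, (bb.coord 0).linearMap_vsub, vsub_eq_sub]
    have hLw : (bb.coord 0).linear w = bb.coord 0 (A 2) - bb.coord 0 A₀ := by
      rw [hw_def, ← vsub_eq_sub, (bb.coord 0).linearMap_vsub, vsub_eq_sub]
    have hLsmul : (bb.coord 0).linear v = (b / c) * (bb.coord 0).linear w := by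
      rw [hvtw, map_smul]; rfl
    rw [hLv, hLw, hfA1, hfA2] at hLsmul
    have hf0 : bb.coord 0 A₀ = 0 := by
      have h1 : (1 - b / c) * bb.coord 0 A₀ = 0 := by linarith [hLsmul]
      rcases mul_eq_zero.1 h1 with h | h
      · exact absurd (by linarith : b / c = 1) ht1
      · exact h
    exact absurd (hco 0) (by rw [hf0]; exact lt_irrefl 0)
  -- the third angle
  have hvw : ⟪v, w⟫ = -(1/2) * (b * c) := by
    rw [inner2_aux]
    refine key2d_aux (u 0) (u 1) (v 0) (v 1) (w 0) (w 1) a b c ha ha2 hb2 hc2 ?_ ?_ ?_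
    · rw [← inner2_aux]; exact huv
    · rw [← inner2_aux]; exact huw
    · rw [← inner2_aux]; exact hvw_ne
  have hangle : InnerProductGeometry.angle v w = 2 * Real.pi / 3 := by
    rw [InnerProductGeometry.angle, ← hb_def, ← hc_def, hvw]
    rw [show -(1/2) * (b * c) / (b * c) = -(1/2) by
      field_simp]
    rw [← hcos23, Real.arccos_cos (by positivity) (by nlinarith [Real.pi_pos])]
  refine ⟨by simpa [EuclideanGeometry.angle, vsub_eq_sub, hv_def, hw_def] using hangle, ?_⟩
  -- Part 2
  intro B hBpos hsum _hsum2 hmin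
  have h0ne : A₀ ≠ A 0 := fun h => hu (by rw [hu_def, ← h, sub_self])
  have h1ne : A₀ ≠ A 1 := fun h => hv (by rw [hv_def, ← h, sub_self])
  have h2ne : A₀ ≠ A 2 := fun h => hw (by rw [hw_def, ← h, sub_self])
  have hA0ne : ∀ i : Fin 3, A₀ ≠ A i := by
    intro i
    fin_cases i
    exacts [h0ne, h1ne, h2ne]
  have hD : HasFDerivAt (fun X => ∑ i, B i * ‖X - A i‖)
      (∑ i, B i • (‖A₀ - A i‖⁻¹ • innerSL ℝ (A₀ - A i))) A₀ :=
    HasFDerivAt.fun_sum fun i _ =>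
      (hasFDerivAt_norm_sub_aux (A i) A₀ (hA0ne i)).const_mul (B i)
  have hlocal : IsLocalMin (fun X => ∑ i, B i * ‖X - A i‖) A₀ :=
    Filter.Eventually.of_forall hmin
  have hzero := hlocal.hasFDerivAt_eq_zero hD
  have hEval : ∀ d : EuclideanSpace ℝ (Fin 2),
      ∑ i, B i * (‖A₀ - A i‖⁻¹ * ⟪A₀ - A i, d⟫) = 0 := by
    intro d
    have h := ContinuousLinearMap.ext_iff.1 hzero d
    rw [ContinuousLinearMap.sum_apply] at h
    simp only [ContinuousLinearMap.coe_smul', Pi.smul_apply, innerSL_apply_apply,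
      smul_eq_mul, ContinuousLinearMap.zero_apply] at h
    rw [← h]
  have hsub : ∀ i : Fin 3, A₀ - A i = -(A i - A₀) := fun i => (neg_sub _ _).symm
  have hnorm0 : ‖A₀ - A 0‖ = a := by rw [hsub 0, norm_neg, ha_def, hu_def]
  have hnorm1 : ‖A₀ - A 1‖ = b := by rw [hsub 1, norm_neg, hb_def, hv_def]
  have hnorm2 : ‖A₀ - A 2‖ = c := by rw [hsub 2, norm_neg, hc_def, hw_def]
  have hEval' : ∀ d : EuclideanSpace ℝ (Fin 2),
      B 0 * (a⁻¹ * ⟪u, d⟫) + B 1 * (b⁻¹ * ⟪v, d⟫) + B 2 * (c⁻¹ * ⟪w, d⟫) = 0 := by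
    intro d
    have h := hEval d
    rw [Fin.sum_univ_three, hnorm0, hnorm1, hnorm2, hsub 0, hsub 1, hsub 2] at h
    rw [← hu_def, ← hv_def, ← hw_def] at h
    rw [inner_neg_left, inner_neg_left, inner_neg_left] at h
    linarith [h]
  have e0 := hEval' u
  have e1 := hEval' v
  rw [real_inner_self_eq_norm_sq, ← ha_def, real_inner_comm u v, huv,
    real_inner_comm u w, huw] at e0
  rw [huv, real_inner_self_eq_norm_sq, ← hb_def, real_inner_comm v w, hvw] at e1
  have s1 : a⁻¹ * a ^ 2 = a := by rw [sq, ← mul_assoc, inv_mul_cancel₀ ha.ne', one_mul]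
  have s2 : b⁻¹ * (-(1/2) * (a * b)) = -(1/2) * a := by
    field_simp
  have s3 : c⁻¹ * (-(1/2) * (a * c)) = -(1/2) * a := by
    field_simp
  have s4 : a⁻¹ * (-(1/2) * (a * b)) = -(1/2) * b := by
    field_simp
  have s5 : b⁻¹ * b ^ 2 = b := by rw [sq, ← mul_assoc, inv_mul_cancel₀ hb.ne', one_mul]
  have s6 : c⁻¹ * (-(1/2) * (b * c)) = -(1/2) * b := by
    field_simp
  rw [s1, s2, s3] at e0
  rw [s4, s5, s6] at e1
  have ea : a * (B 0 - (1/2) * B 1 - (1/2) * B 2) = 0 := by linear_combination e0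
  have eb : b * (-(1/2) * B 0 + B 1 - (1/2) * B 2) = 0 := by linear_combination e1
  have r1 : B 0 - (1/2) * B 1 - (1/2) * B 2 = 0 := by
    rcases mul_eq_zero.1 ea with h | h
    · exact absurd h ha.ne'
    · exact h
  have r2 : -(1/2) * B 0 + B 1 - (1/2) * B 2 = 0 := by
    rcases mul_eq_zero.1 eb with h | h
    · exact absurd h hb.ne'
    · exact h
  refine ⟨by linarith, by linarith, by linarith⟩
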